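/- Let p ∤ a₁ and p ∤ a₂, with roots c₁ = -b₁/a₁ and c₂ = -b₂/a₂ in ℤ_p, and suppose c₁ ≡ c₂ (mod p^r) but c₁ ≢ c₂ (mod p^{r+1}). Let k ≥ r+1 and let m ∈ ℕ satisfy m ≡ c₁ (mod p^k) and m ≢ c₁ (mod p^{k+1}). Then for all n ≡ m (mod p^{k+1}), the p-adic valuation of (a₁n+b₁)(a₂n+b₂) equals k + r. -/

import Mathlib

open PadicInt

private lemma pow_dvd_iff_le_val {p : ℕ} [hp : Fact p.Prime] {x : ℤ_[p]} (hx : x ≠ 0) (m : ℕ) :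
    (p : ℤ_[p]) ^ m ∣ x ↔ (m : ℤ) ≤ x.valuation := by
  rw [← Ideal.mem_span_singleton, PadicInt.mem_span_pow_iff_le_valuation x hx]
  exact Nat.cast_le.symm

private lemma val_eq_of {p : ℕ} [hp : Fact p.Prime] {x : ℤ_[p]} (m : ℕ)
    (h1 : (p : ℤ_[p]) ^ m ∣ x) (h2 : ¬ (p : ℤ_[p]) ^ (m + 1) ∣ x) :
    x.valuation = m := by
  have hx : x ≠ 0 := by rintro rfl; exact h2 (dvd_zero _)
  have hle := (pow_dvd_iff_le_val hx m).mp h1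
  have hlt := (pow_dvd_iff_le_val hx (m + 1)).not.mp h2
  push_neg at hlt
  omega

private lemma val_unit {p : ℕ} [hp : Fact p.Prime] {a : ℤ} (ha : ¬ (p : ℤ) ∣ a) :
    ((a : ℤ_[p])).valuation = 0 := by
  have ha' : ¬ (p : ℤ_[p]) ^ 1 ∣ (a : ℤ_[p]) := by
    rw [PadicInt.pow_p_dvd_int_iff, pow_one]; exact ha
  exact val_eq_of 0 (by simp) ha'


private lemma val_mul {p : ℕ} [hp : Fact p.Prime] {x y : ℤ_[p]} (hx : x ≠ 0) (hy : y ≠ 0) :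
    (x * y).valuation = x.valuation + y.valuation := by
  exact PadicInt.valuation_mul hx hy

theorem stmt_9 (p : ℕ) [hp : Fact p.Prime] (a₁ b₁ a₂ b₂ : ℤ)
    (hab₁ : Int.gcd a₁ b₁ = 1) (hab₂ : Int.gcd a₂ b₂ = 1)
    (hpa₁ : ¬ (p : ℤ) ∣ a₁) (hpa₂ : ¬ (p : ℤ) ∣ a₂)
    (c₁ c₂ : ℤ_[p]) (hc₁ : (a₁ : ℤ_[p]) * c₁ + (b₁ : ℤ_[p]) = 0)
    (hc₂ : (a₂ : ℤ_[p]) * c₂ + (b₂ : ℤ_[p]) = 0) (hne : c₁ ≠ c₂)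
    (r : ℕ) (hr1 : (p : ℤ_[p]) ^ r ∣ (c₁ - c₂)) (hr2 : ¬ (p : ℤ_[p]) ^ (r + 1) ∣ (c₁ - c₂))
    (k : ℕ) (hk : r + 1 ≤ k) (n : ℕ)
    (hn1 : (p : ℤ_[p]) ^ k ∣ ((n : ℤ_[p]) - c₁))
    (hn2 : ¬ (p : ℤ_[p]) ^ (k + 1) ∣ ((n : ℤ_[p]) - c₁)) :
    padicValInt p ((a₁ * (n : ℤ) + b₁) * (a₂ * (n : ℤ) + b₂)) = k + r := by
  -- valuation of n - c₁ is k
  have hv1 : ((n : ℤ_[p]) - c₁).valuation = k := val_eq_of k hn1 hn2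
  -- n - c₂ : p^r divides, p^(r+1) doesn't
  have hdc : (p : ℤ_[p]) ^ (r + 1) ∣ ((n : ℤ_[p]) - c₁) :=
    dvd_trans (pow_dvd_pow _ hk) hn1
  have hd1 : (p : ℤ_[p]) ^ r ∣ ((n : ℤ_[p]) - c₂) := by
    have : (n : ℤ_[p]) - c₂ = ((n : ℤ_[p]) - c₁) + (c₁ - c₂) := by ring
    rw [this]
    exact dvd_add (dvd_trans (pow_dvd_pow _ (by omega)) hn1) hr1
  have hd2 : ¬ (p : ℤ_[p]) ^ (r + 1) ∣ ((n : ℤ_[p]) - c₂) := by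
    intro h
    apply hr2
    have : c₁ - c₂ = ((n : ℤ_[p]) - c₂) - ((n : ℤ_[p]) - c₁) := by ring
    rw [this]
    exact dvd_sub h hdc
  have hv2 : ((n : ℤ_[p]) - c₂).valuation = r := val_eq_of r hd1 hd2
  -- nonzero facts
  have hx1 : (n : ℤ_[p]) - c₁ ≠ 0 := by rintro h; exact hn2 (h ▸ dvd_zero _)
  have hx2 : (n : ℤ_[p]) - c₂ ≠ 0 := by rintro h; exact hd2 (h ▸ dvd_zero _)
  have ha1 : (a₁ : ℤ_[p]) ≠ 0 := by
    simp only [ne_eq, Int.cast_eq_zero]; rintro rfl; exact hpa₁ (dvd_zero _)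
  have ha2 : (a₂ : ℤ_[p]) ≠ 0 := by
    simp only [ne_eq, Int.cast_eq_zero]; rintro rfl; exact hpa₂ (dvd_zero _)
  -- factorization
  have hb₁ : (b₁ : ℤ_[p]) = -((a₁ : ℤ_[p]) * c₁) := by linear_combination hc₁
  have hb₂ : (b₂ : ℤ_[p]) = -((a₂ : ℤ_[p]) * c₂) := by linear_combination hc₂
  have hfac : (((a₁ * (n : ℤ) + b₁) * (a₂ * (n : ℤ) + b₂) : ℤ) : ℤ_[p])
      = ((a₁ : ℤ_[p]) * ((n : ℤ_[p]) - c₁)) * ((a₂ : ℤ_[p]) * ((n : ℤ_[p]) - c₂)) := by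
    push_cast
    rw [hb₁, hb₂]; ring
  -- valuation of the product
  have hM : (((a₁ * (n : ℤ) + b₁) * (a₂ * (n : ℤ) + b₂) : ℤ) : ℤ_[p]).valuation = k + r := by
    rw [hfac, val_mul (mul_ne_zero ha1 hx1) (mul_ne_zero ha2 hx2),
      val_mul ha1 hx1, val_mul ha2 hx2, val_unit hpa₁, val_unit hpa₂, hv1, hv2]
    push_cast; ring
  -- translate to padicValInt
  have key : ((((a₁ * (n : ℤ) + b₁) * (a₂ * (n : ℤ) + b₂) : ℤ)) : ℚ_[p]).valuation = k + r := by
    rw [← PadicInt.coe_intCast] at *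
    rw [PadicInt.valuation_coe]; exact_mod_cast hM
  rw [Padic.valuation_intCast] at key
  exact_mod_cast key
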